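/- Let f, g : ℝ^d → ℂ be essentially bounded measurable functions and let (A_n) be a Følner sequence. Then for every x ∈ ℝ^d, lim_{n→∞} (1/vol(A_n)) ∫_{A_n} f(s) conj(g(s-x)) ds exists if and only if lim_{n→∞} (1/vol(A_n)) ∫_{ℝ^d} (1_{A_n} f)(s) conj((1_{A_n} g)(s-x)) ds exists, and in that case they are equal. -/

import Mathlib

open MeasureTheory Filter
open scoped Pointwise symmDiff
open scoped ENNReal NNReal

/-- For essentially bounded measurable `f, g : ℝ^d → ℂ` and a Følner sequence `(A n)`,
the averaged correlation over `A n` (restricting only `f`) converges iff the averaged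
correlation of the restrictions `1_{A n} f` and `1_{A n} g` converges, and in that case
the limits coincide. -/
theorem bounded_reflected_convolution_restriction (d : ℕ)
    (A : ℕ → Set (EuclideanSpace ℝ (Fin d)))
    (hbdd : ∀ n, Bornology.IsBounded (A n))
    (hmeas : ∀ n, MeasurableSet (A n))
    (hpos : ∀ n, 0 < volume (A n))
    (hFolner : ∀ u : EuclideanSpace ℝ (Fin d),
      Tendsto (fun n => volume ((A n) ∆ (u +ᵥ A n)) / volume (A n)) atTop (nhds 0))
    (f g : EuclideanSpace ℝ (Fin d) → ℂ)
    (hf : MemLp f ⊤ volume) (hg : MemLp g ⊤ volume)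
    (x : EuclideanSpace ℝ (Fin d)) :
    ((∃ l : ℂ, Tendsto (fun n =>
        (((volume (A n)).toReal⁻¹ : ℝ) : ℂ) *
          ∫ s in A n, f s * (starRingEnd ℂ) (g (s - x))) atTop (nhds l)) ↔
      (∃ l : ℂ, Tendsto (fun n =>
        (((volume (A n)).toReal⁻¹ : ℝ) : ℂ) *
          ∫ s, (A n).indicator f s * (starRingEnd ℂ) ((A n).indicator g (s - x)))
        atTop (nhds l))) ∧
    (∀ l : ℂ, Tendsto (fun n =>
        (((volume (A n)).toReal⁻¹ : ℝ) : ℂ) *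
          ∫ s in A n, f s * (starRingEnd ℂ) (g (s - x))) atTop (nhds l) →
      Tendsto (fun n =>
        (((volume (A n)).toReal⁻¹ : ℝ) : ℂ) *
          ∫ s, (A n).indicator f s * (starRingEnd ℂ) ((A n).indicator g (s - x)))
        atTop (nhds l)) := by
  set F : ℕ → ℂ := fun n =>
    (((volume (A n)).toReal⁻¹ : ℝ) : ℂ) * ∫ s in A n, f s * (starRingEnd ℂ) (g (s - x))
  set G : ℕ → ℂ := fun n =>
    (((volume (A n)).toReal⁻¹ : ℝ) : ℂ) *
      ∫ s, (A n).indicator f s * (starRingEnd ℂ) ((A n).indicator g (s - x))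
  set h : EuclideanSpace ℝ (Fin d) → ℂ := fun s => f s * (starRingEnd ℂ) (g (s - x)) with hh
  -- essential sup bounds
  set Cf : ℝ := (eLpNormEssSup f volume).toReal
  set Cg : ℝ := (eLpNormEssSup g volume).toReal
  have hffin : eLpNormEssSup f volume ≠ ⊤ := by
    have := hf.2; rw [eLpNorm_exponent_top] at this; exact this.ne
  have hgfin : eLpNormEssSup g volume ≠ ⊤ := by
    have := hg.2; rw [eLpNorm_exponent_top] at this; exact this.ne
  have hfae : ∀ᵐ s ∂(volume : Measure (EuclideanSpace ℝ (Fin d))), ‖f s‖ ≤ Cf := by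
    filter_upwards [ae_le_eLpNormEssSup (f := f) (μ := volume)] with s hs
    calc ‖f s‖ = ((‖f s‖₊ : ℝ≥0∞)).toReal := by simp
    _ ≤ Cf := ENNReal.toReal_mono hffin (by exact_mod_cast hs)
  have hgae : ∀ᵐ s ∂(volume : Measure (EuclideanSpace ℝ (Fin d))), ‖g s‖ ≤ Cg := by
    filter_upwards [ae_le_eLpNormEssSup (f := g) (μ := volume)] with s hs
    calc ‖g s‖ = ((‖g s‖₊ : ℝ≥0∞)).toReal := by simp
    _ ≤ Cg := ENNReal.toReal_mono hgfin (by exact_mod_cast hs)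
  have hmp : MeasurePreserving (fun s : EuclideanSpace ℝ (Fin d) => s - x) volume volume :=
    measurePreserving_sub_right volume x
  have hgae' : ∀ᵐ s ∂(volume : Measure (EuclideanSpace ℝ (Fin d))), ‖g (s - x)‖ ≤ Cg :=
    hmp.quasiMeasurePreserving.ae hgae
  have hCf : 0 ≤ Cf := ENNReal.toReal_nonneg
  have hCg : 0 ≤ Cg := ENNReal.toReal_nonneg
  have hhae : ∀ᵐ s ∂(volume : Measure (EuclideanSpace ℝ (Fin d))), ‖h s‖ ≤ Cf * Cg := by
    filter_upwards [hfae, hgae'] with s h1 h2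
    calc ‖h s‖ = ‖f s‖ * ‖g (s - x)‖ := by simp [hh]
    _ ≤ Cf * Cg := mul_le_mul h1 h2 (norm_nonneg _) hCf
  have hhm : AEStronglyMeasurable h volume := by
    have : AEStronglyMeasurable (fun s => g (s - x)) volume := hg.1.comp_measurePreserving hmp
    exact hf.1.mul (continuous_star.comp_aestronglyMeasurable this)
  -- finiteness of measures
  have hfinA : ∀ n, volume (A n) ≠ ⊤ := fun n => (hbdd n).measure_lt_top.ne
  have hint : ∀ n, IntegrableOn h (A n) volume := fun n =>
    Measure.integrableOn_of_bounded (hfinA n) hhm (ae_restrict_of_ae hhae)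
  have hmeasT : ∀ n, MeasurableSet (x +ᵥ A n) := fun n =>
    (hmeas n).const_vadd x
  -- rewrite G n as a set integral over A n ∩ (x +ᵥ A n)
  have hGrw : ∀ n, (∫ s, (A n).indicator f s * (starRingEnd ℂ) ((A n).indicator g (s - x)))
      = ∫ s in A n ∩ (x +ᵥ A n), h s := by
    intro n
    rw [← integral_indicator ((hmeas n).inter (hmeasT n))]
    congr 1
    funext s
    by_cases hs : s ∈ A n
    · by_cases hs' : s - x ∈ A n
      · have hmem : s ∈ x +ᵥ A n := ⟨s - x, hs', by simp⟩
        simp [Set.indicator_of_mem, hs, hs', Set.indicator_of_mem (Set.mem_inter hs hmem), hh]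
      · have hnm : s ∉ A n ∩ (x +ᵥ A n) := by
          rintro ⟨-, y, hy, rfl⟩
          exact hs' (by simpa using hy)
        simp [Set.indicator_of_mem hs, Set.indicator_of_notMem hs',
          Set.indicator_of_notMem hnm]
    · have hnm : s ∉ A n ∩ (x +ᵥ A n) := fun hmem => hs hmem.1
      simp [Set.indicator_of_notMem hs, Set.indicator_of_notMem hnm]
  -- difference of integrals
  have hdiffint : ∀ n, (∫ s in A n, h s) - (∫ s in A n ∩ (x +ᵥ A n), h s)
      = ∫ s in A n \ (x +ᵥ A n), h s := by
    intro n
    have := integral_inter_add_diff (f := h) (μ := volume) (s := A n) (hmeasT n) (hint n)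
    rw [← this]; ring
  have hFG : ∀ n, F n - G n
      = (((volume (A n)).toReal⁻¹ : ℝ) : ℂ) * ∫ s in A n \ (x +ᵥ A n), h s := by
    intro n
    simp only [F, G, hGrw n, ← hdiffint n]
    ring
  have hsub : ∀ n, volume (A n \ (x +ᵥ A n)) ≤ volume (A n ∆ (x +ᵥ A n)) := by
    intro n
    exact measure_mono (by rw [Set.symmDiff_def]; exact Set.subset_union_left)
  have hfinΔ : ∀ n, volume (A n ∆ (x +ᵥ A n)) ≠ ⊤ := by
    intro n
    have hle : volume (A n ∆ (x +ᵥ A n)) ≤ volume (A n) + volume (x +ᵥ A n) :=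
      (measure_mono Set.symmDiff_subset_union).trans (measure_union_le _ _)
    rw [measure_vadd] at hle
    exact ne_top_of_le_ne_top (ENNReal.add_ne_top.2 ⟨hfinA n, hfinA n⟩) hle
  have hbound : ∀ n, ‖F n - G n‖
      ≤ (Cf * Cg) * (volume (A n ∆ (x +ᵥ A n)) / volume (A n)).toReal := by
    intro n
    have ha : (0:ℝ) < (volume (A n)).toReal :=
      ENNReal.toReal_pos (hpos n).ne' (hfinA n)
    have h1 : ‖∫ s in A n \ (x +ᵥ A n), h s‖
        ≤ (Cf * Cg) * (volume (A n \ (x +ᵥ A n))).toReal := by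
      refine norm_setIntegral_le_of_norm_le_const_ae ?_ ?_
      · exact (hsub n).trans_lt (hfinΔ n).lt_top
      · exact ae_restrict_of_ae hhae
    have h2 : (volume (A n \ (x +ᵥ A n))).toReal ≤ (volume (A n ∆ (x +ᵥ A n))).toReal :=
      ENNReal.toReal_mono (hfinΔ n) (hsub n)
    rw [hFG n, norm_mul, Complex.norm_real, Real.norm_eq_abs,
      abs_of_nonneg (inv_nonneg.2 ha.le), ENNReal.toReal_div]
    calc ((volume (A n)).toReal)⁻¹ * ‖∫ s in A n \ (x +ᵥ A n), h s‖
        ≤ ((volume (A n)).toReal)⁻¹ * ((Cf * Cg) * (volume (A n ∆ (x +ᵥ A n))).toReal) := by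
          refine mul_le_mul_of_nonneg_left (h1.trans ?_) (inv_nonneg.2 ha.le)
          exact mul_le_mul_of_nonneg_left h2 (mul_nonneg hCf hCg)
      _ = (Cf * Cg) * ((volume (A n ∆ (x +ᵥ A n))).toReal / (volume (A n)).toReal) := by
          rw [div_eq_mul_inv]; ring
  have hratio : Tendsto (fun n => (volume (A n ∆ (x +ᵥ A n)) / volume (A n)).toReal)
      atTop (nhds 0) := by
    have := (ENNReal.tendsto_toReal (a := 0) (by simp)).comp (hFolner x)
    simp only [Function.comp_def, ENNReal.toReal_zero] at this
    exact this
  have hzero : Tendsto (fun n => F n - G n) atTop (nhds 0) := by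
    apply squeeze_zero_norm hbound
    simpa using hratio.const_mul (Cf * Cg)
  refine ⟨⟨fun ⟨l, hl⟩ => ⟨l, ?_⟩, fun ⟨l, hl⟩ => ⟨l, ?_⟩⟩, fun l hl => ?_⟩
  · simpa using hl.sub hzero
  · simpa using hzero.add hl
  · simpa using hl.sub hzero
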